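/- Symmetric Lovász local lemma: Let (Ω, P) be a probability space and B_1, …, B_M events with P(B_m) ≤ p for all m. Suppose for each m there is a set Γ(m) ⊆ {1, …, M} \ {m} with |Γ(m)| ≤ d such that B_m is mutually independent of the events outside Γ(m) ∪ {m}, in the sense that for every J ⊆ {1, …, M} \ ({m} ∪ Γ(m)), P(B_m ∩ ⋂_{j∈J} B_jᶜ) = P(B_m) · P(⋂_{j∈J} B_jᶜ). If e · p · (d+1) ≤ 1 (where e is Euler's constant), then P(⋂_{m=1}^M B_mᶜ) > 0. -/

import Mathlib

open MeasureTheory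

private lemma lll_insert_toReal {Ω : Type*} [MeasurableSpace Ω]
    (P : Measure Ω) [IsProbabilityMeasure P]
    {M : ℕ} (B : Fin M → Set Ω) (hB : ∀ m, MeasurableSet (B m))
    (i : Fin M) (T : Finset (Fin M)) :
    (P (⋂ j ∈ insert i T, (B j)ᶜ)).toReal
      = (P (⋂ j ∈ T, (B j)ᶜ)).toReal - (P (B i ∩ ⋂ j ∈ T, (B j)ᶜ)).toReal := by
  have h := measure_inter_add_diff (μ := P) (⋂ j ∈ T, (B j)ᶜ) (hB i)
  have hset : (⋂ j ∈ T, (B j)ᶜ) \ B i = ⋂ j ∈ insert i T, (B j)ᶜ := by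
    rw [Finset.set_biInter_insert, Set.diff_eq, Set.inter_comm]
  have hset2 : (⋂ j ∈ T, (B j)ᶜ) ∩ B i = B i ∩ ⋂ j ∈ T, (B j)ᶜ := Set.inter_comm _ _
  rw [hset, hset2] at h
  have h1 : P (B i ∩ ⋂ j ∈ T, (B j)ᶜ) ≠ ⊤ := measure_ne_top _ _
  have h2 : P (⋂ j ∈ insert i T, (B j)ᶜ) ≠ ⊤ := measure_ne_top _ _
  have h3 := congrArg ENNReal.toReal h
  rw [ENNReal.toReal_add h1 h2] at h3
  linarith

private lemma lll_key {Ω : Type*} [MeasurableSpace Ω]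
    (P : Measure Ω) [IsProbabilityMeasure P]
    {M : ℕ} (B : Fin M → Set Ω) (hB : ∀ m, MeasurableSet (B m))
    (p : ℝ) (hp0 : 0 ≤ p) (hp : ∀ m, (P (B m)).toReal ≤ p)
    (d : ℕ) (Γ : Fin M → Finset (Fin M))
    (hΓ_card : ∀ m, (Γ m).card ≤ d)
    (h_indep : ∀ m, ∀ J : Finset (Fin M), m ∉ J → (∀ j ∈ J, j ∉ Γ m) →
      P (B m ∩ ⋂ j ∈ J, (B j)ᶜ) = P (B m) * P (⋂ j ∈ J, (B j)ᶜ))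
    (c : ℝ) (hc0 : 0 ≤ c) (hc1 : c < 1) (hpc : p ≤ c * (1-c)^d) :
    ∀ n : ℕ, ∀ S : Finset (Fin M), S.card ≤ n →
      0 < (P (⋂ j ∈ S, (B j)ᶜ)).toReal ∧
      ∀ m, m ∉ S → (P (B m ∩ ⋂ j ∈ S, (B j)ᶜ)).toReal
        ≤ c * (P (⋂ j ∈ S, (B j)ᶜ)).toReal := by
  have hc1' : (0:ℝ) ≤ 1 - c := by linarith
  have hpow1 : (1-c)^d ≤ 1 := pow_le_one₀ hc1' (by linarith)
  intro n
  induction n with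
  | zero =>
    intro S hS
    have hSe : S = ∅ := Finset.card_eq_zero.mp (Nat.le_zero.mp hS)
    subst hSe
    constructor
    · simp
    · intro m _
      have h1 : (P (B m ∩ ⋂ j ∈ (∅ : Finset (Fin M)), (B j)ᶜ)).toReal
          = (P (B m)).toReal := by simp
      have h2 : (P (⋂ j ∈ (∅ : Finset (Fin M)), (B j)ᶜ)).toReal = 1 := by simp
      rw [h1, h2, mul_one]
      calc (P (B m)).toReal ≤ p := hp m
        _ ≤ c * (1-c)^d := hpc
        _ ≤ c * 1 := by nlinarith
        _ = c := mul_one c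
  | succ n ih =>
    intro S hS
    rcases Nat.lt_or_ge S.card (n+1) with hlt | hge
    · exact ih S (Nat.lt_succ_iff.mp hlt)
    have hcard : S.card = n + 1 := le_antisymm hS hge
    have hpos : 0 < (P (⋂ j ∈ S, (B j)ᶜ)).toReal := by
      have hne : S.Nonempty := by
        rw [← Finset.card_pos, hcard]; exact Nat.succ_pos n
      obtain ⟨i, hi⟩ := hne
      have hT : (S.erase i).card ≤ n := by
        have := Finset.card_erase_of_mem hi; omega
      obtain ⟨hTpos, hTb⟩ := ih _ hT
      have hb := hTb i (Finset.notMem_erase i S)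
      have heq := lll_insert_toReal P B hB i (S.erase i)
      rw [Finset.insert_erase hi] at heq
      nlinarith
    refine ⟨hpos, ?_⟩
    intro m hm
    set S₁ := S ∩ Γ m with hS₁def
    set S₂ := S \ Γ m with hS₂def
    have hm2 : m ∉ S₂ := fun h => hm (Finset.mem_sdiff.mp h).1
    have hindep2 : P (B m ∩ ⋂ j ∈ S₂, (B j)ᶜ) = P (B m) * P (⋂ j ∈ S₂, (B j)ᶜ) :=
      h_indep m S₂ hm2 (fun j hj => (Finset.mem_sdiff.mp hj).2)
    have hcards : S₂.card + S₁.card = S.card := Finset.card_sdiff_add_card_inter S (Γ m)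
    -- (a) the numerator bound
    have ha : (P (B m ∩ ⋂ j ∈ S, (B j)ᶜ)).toReal
        ≤ p * (P (⋂ j ∈ S₂, (B j)ᶜ)).toReal := by
      have hsub : (⋂ j ∈ S, (B j)ᶜ) ⊆ ⋂ j ∈ S₂, (B j)ᶜ := by
        intro x hx
        simp only [Set.mem_iInter] at hx ⊢
        exact fun j hj => hx j (Finset.mem_sdiff.mp hj).1
      have hmono : P (B m ∩ ⋂ j ∈ S, (B j)ᶜ) ≤ P (B m ∩ ⋂ j ∈ S₂, (B j)ᶜ) :=
        measure_mono (Set.inter_subset_inter_right _ hsub)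
      have h1 : (P (B m ∩ ⋂ j ∈ S, (B j)ᶜ)).toReal
          ≤ (P (B m ∩ ⋂ j ∈ S₂, (B j)ᶜ)).toReal :=
        ENNReal.toReal_mono (measure_ne_top _ _) hmono
      have h2 : (P (B m ∩ ⋂ j ∈ S₂, (B j)ᶜ)).toReal
          = (P (B m)).toReal * (P (⋂ j ∈ S₂, (B j)ᶜ)).toReal := by
        rw [hindep2, ENNReal.toReal_mul]
      rw [h2] at h1
      calc (P (B m ∩ ⋂ j ∈ S, (B j)ᶜ)).toReal
          ≤ (P (B m)).toReal * (P (⋂ j ∈ S₂, (B j)ᶜ)).toReal := h1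
        _ ≤ p * (P (⋂ j ∈ S₂, (B j)ᶜ)).toReal :=
            mul_le_mul_of_nonneg_right (hp m) ENNReal.toReal_nonneg
    -- (b) peeling: the denominator bound
    have hbgen : ∀ F : Finset (Fin M), F ⊆ S₁ →
        (1-c)^F.card * (P (⋂ j ∈ S₂, (B j)ᶜ)).toReal
          ≤ (P (⋂ j ∈ S₂ ∪ F, (B j)ᶜ)).toReal := by
      intro F
      induction F using Finset.induction_on with
      | empty => simp
      | @insert i F hiF ihF =>
        intro hsub
        have hiS₁ : i ∈ S₁ := hsub (Finset.mem_insert_self i F)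
        have hFS₁ : F ⊆ S₁ := fun a ha => hsub (Finset.mem_insert_of_mem ha)
        have hiS₂ : i ∉ S₂ := fun h =>
          (Finset.mem_sdiff.mp h).2 (Finset.mem_inter.mp hiS₁).2
        have hiU : i ∉ S₂ ∪ F := by
          simp only [Finset.mem_union]; tauto
        have hFcard : F.card ≤ S₁.card - 1 := by
          have : F ⊆ S₁.erase i := fun a ha =>
            Finset.mem_erase.mpr ⟨fun h => hiF (h ▸ ha), hFS₁ ha⟩
          have := Finset.card_le_card this
          have := Finset.card_erase_of_mem hiS₁
          omega
        have hS₁pos : 1 ≤ S₁.card := Finset.card_pos.mpr ⟨i, hiS₁⟩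
        have hUcard : (S₂ ∪ F).card ≤ n := by
          have := Finset.card_union_le S₂ F
          omega
        obtain ⟨hUpos, hUb⟩ := ih _ hUcard
        have hb := hUb i hiU
        have heq := lll_insert_toReal P B hB i (S₂ ∪ F)
        have hins : S₂ ∪ insert i F = insert i (S₂ ∪ F) := by
          ext a; simp [Finset.mem_union, Finset.mem_insert]
        have hFF := ihF hFS₁
        rw [hins, heq, Finset.card_insert_of_notMem hiF, pow_succ]
        have hnn : (0:ℝ) ≤ (1-c)^F.card := pow_nonneg hc1' _
        nlinarith
    have hbS : (1-c)^S₁.card * (P (⋂ j ∈ S₂, (B j)ᶜ)).toReal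
        ≤ (P (⋂ j ∈ S, (B j)ᶜ)).toReal := by
      have := hbgen S₁ (le_refl _)
      rwa [Finset.sdiff_union_inter S (Γ m)] at this
    have hk : S₁.card ≤ d :=
      le_trans (Finset.card_le_card (Finset.inter_subset_right)) (hΓ_card m)
    have hpowk : (1-c)^d ≤ (1-c)^S₁.card :=
      pow_le_pow_of_le_one hc1' (by linarith) hk
    have hμ2 : (0:ℝ) ≤ (P (⋂ j ∈ S₂, (B j)ᶜ)).toReal := ENNReal.toReal_nonneg
    calc (P (B m ∩ ⋂ j ∈ S, (B j)ᶜ)).toReal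
        ≤ p * (P (⋂ j ∈ S₂, (B j)ᶜ)).toReal := ha
      _ ≤ c * (1-c)^d * (P (⋂ j ∈ S₂, (B j)ᶜ)).toReal :=
          mul_le_mul_of_nonneg_right hpc hμ2
      _ ≤ c * ((1-c)^S₁.card * (P (⋂ j ∈ S₂, (B j)ᶜ)).toReal) := by
          rw [mul_assoc]
          exact mul_le_mul_of_nonneg_left (mul_le_mul_of_nonneg_right hpowk hμ2) hc0
      _ ≤ c * (P (⋂ j ∈ S, (B j)ᶜ)).toReal :=
          mul_le_mul_of_nonneg_left hbS hc0

/-- **Symmetric Lovász local lemma.**  If each of the events `B m` has probability at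
most `p`, each `B m` is mutually independent of all the events outside `Γ m ∪ {m}`
with `|Γ m| ≤ d`, and `e ⋅ p ⋅ (d + 1) ≤ 1`, then with positive probability none of
the events occurs. -/
theorem lovasz_local_lemma {Ω : Type*} [MeasurableSpace Ω]
    (P : Measure Ω) [IsProbabilityMeasure P]
    (M : ℕ) (B : Fin M → Set Ω) (hB : ∀ m, MeasurableSet (B m))
    (p : ℝ) (hp : ∀ m, P (B m) ≤ ENNReal.ofReal p)
    (d : ℕ) (Γ : Fin M → Finset (Fin M))
    (hΓ_self : ∀ m, m ∉ Γ m)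
    (hΓ_card : ∀ m, (Γ m).card ≤ d)
    (h_indep : ∀ m, ∀ J : Finset (Fin M), m ∉ J → (∀ j ∈ J, j ∉ Γ m) →
      P (B m ∩ ⋂ j ∈ J, (B j)ᶜ) = P (B m) * P (⋂ j ∈ J, (B j)ᶜ))
    (hLLL : Real.exp 1 * p * (d + 1) ≤ 1) :
    0 < P (⋂ m, (B m)ᶜ) := by
  set p' := max p 0 with hp'def
  have hp'0 : 0 ≤ p' := le_max_right _ _
  have hp'' : ∀ m, (P (B m)).toReal ≤ p' := by
    intro m
    have h1 : P (B m) ≤ ENNReal.ofReal p' :=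
      (hp m).trans (ENNReal.ofReal_le_ofReal (le_max_left _ _))
    calc (P (B m)).toReal ≤ (ENNReal.ofReal p').toReal :=
          ENNReal.toReal_mono ENNReal.ofReal_ne_top h1
      _ = p' := ENNReal.toReal_ofReal hp'0
  have hE1 : (1:ℝ) < Real.exp 1 := by
    have := Real.add_one_lt_exp (x := 1) one_ne_zero
    linarith
  have hdpos : (0:ℝ) < (d:ℝ) + 1 := by positivity
  have hLLL' : Real.exp 1 * p' * ((d:ℝ) + 1) ≤ 1 := by
    rcases le_or_gt 0 p with h | h
    · rw [hp'def, max_eq_left h]; exact hLLL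
    · rw [hp'def, max_eq_right h.le]; simp
  have hep : Real.exp 1 * p' ≤ 1 / ((d:ℝ) + 1) := by
    rw [le_div_iff₀ hdpos]; linarith
  -- choose the constant c
  obtain ⟨c, hc0, hc1, hpc⟩ : ∃ c : ℝ, 0 ≤ c ∧ c < 1 ∧ p' ≤ c * (1-c)^d := by
    rcases Nat.eq_zero_or_pos d with hd | hd
    · refine ⟨p', hp'0, ?_, ?_⟩
      · subst hd
        norm_num at hep
        nlinarith [hep, hp'0, Real.exp_one_gt_d9]
      · subst hd; simp
    · refine ⟨1 / ((d:ℝ) + 1), by positivity, ?_, ?_⟩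
      · rw [div_lt_one hdpos]
        have : (1:ℝ) ≤ (d:ℝ) := by exact_mod_cast hd
        linarith
      · have hd1 : (1:ℝ) ≤ (d:ℝ) := by exact_mod_cast hd
        have hdpos' : (0:ℝ) < (d:ℝ) := by linarith
        have h1 : (1:ℝ) + 1/(d:ℝ) ≤ Real.exp (1/(d:ℝ)) := by
          have := Real.add_one_le_exp (1/(d:ℝ)); linarith
        have h2 : ((1:ℝ) + 1/(d:ℝ))^d ≤ Real.exp (1/(d:ℝ)) ^ d :=
          pow_le_pow_left₀ (by positivity) h1 d
        have h3 : Real.exp (1/(d:ℝ)) ^ d = Real.exp 1 := by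
          rw [← Real.exp_nat_mul]
          congr 1
          field_simp
        have heq : (1:ℝ) - 1/((d:ℝ)+1) = (1 + 1/(d:ℝ))⁻¹ := by
          field_simp
          ring
        have h4 : ((1:ℝ) - 1/((d:ℝ)+1))^d = (((1:ℝ) + 1/(d:ℝ))^d)⁻¹ := by
          rw [heq, inv_pow]
        have hbase : (0:ℝ) < ((1:ℝ) + 1/(d:ℝ))^d := by positivity
        have h5 : (Real.exp 1)⁻¹ ≤ ((1:ℝ) - 1/((d:ℝ)+1))^d := by
          rw [h4]
          apply inv_anti₀ hbase
          rw [← h3]; exact h2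
        have hepos : (0:ℝ) < Real.exp 1 := Real.exp_pos 1
        have h6 : p' ≤ (Real.exp 1)⁻¹ * (1/((d:ℝ)+1)) := by
          have h := mul_le_mul_of_nonneg_left hep (inv_nonneg.mpr hepos.le)
          rwa [← mul_assoc, inv_mul_cancel₀ (ne_of_gt hepos), one_mul] at h
        calc p' ≤ (Real.exp 1)⁻¹ * (1/((d:ℝ)+1)) := h6
          _ ≤ ((1:ℝ) - 1/((d:ℝ)+1))^d * (1/((d:ℝ)+1)) :=
              mul_le_mul_of_nonneg_right h5 (by positivity)
          _ = 1/((d:ℝ)+1) * (1 - 1/((d:ℝ)+1))^d := by ring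
  have hkey := lll_key P B hB p' hp'0 hp'' d Γ hΓ_card h_indep c hc0 hc1 hpc
    M Finset.univ (by simp)
  have hpos := hkey.1
  have hset : (⋂ m, (B m)ᶜ) = ⋂ j ∈ (Finset.univ : Finset (Fin M)), (B j)ᶜ := by
    simp
  rw [hset]
  rw [pos_iff_ne_zero]
  intro h0
  rw [h0] at hpos
  simp at hpos
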